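/- Let H : ℕ → ℕ be a strictly increasing sequence of positive integers and m ≥ 1. Then there exists a unique γ ∈ (0,1) with ∑_{i≥m} γ^{H_i} = 1. -/
import Mathlib

private lemma summable_aux (H : ℕ → ℕ) (hmono : StrictMono H) (m : ℕ) {x : ℝ}
    (hx0 : 0 ≤ x) (hx1 : x < 1) : Summable (fun i : ℕ => x ^ H (m + i)) := by
  refine Summable.of_nonneg_of_le (fun i => pow_nonneg hx0 _) (fun i => ?_)
    (summable_geometric_of_lt_one hx0 hx1)
  exact pow_le_pow_of_le_one hx0 hx1.le
    (le_trans (Nat.le_add_left i m) hmono.le_apply)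

private lemma smono_aux (H : ℕ → ℕ) (hmono : StrictMono H) (hpos : ∀ i, 1 ≤ H i)
    (m : ℕ) {a b : ℝ} (ha : 0 ≤ a) (hab : a < b) (hb : b < 1) :
    (∑' i : ℕ, a ^ H (m + i)) < ∑' i : ℕ, b ^ H (m + i) := by
  refine Summable.tsum_lt_tsum (i := 0) (fun i => pow_le_pow_left₀ ha hab.le _)
    (pow_lt_pow_left₀ hab ha (Nat.one_le_iff_ne_zero.mp (hpos (m + 0))))
    (summable_aux H hmono m ha (hab.trans hb))
    (summable_aux H hmono m (ha.trans hab.le) hb)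

theorem exists_unique_root (H : ℕ → ℕ) (hmono : StrictMono H) (hpos : ∀ i, 1 ≤ H i)
    (m : ℕ) (hm : 1 ≤ m) :
    ∃! γ : ℝ, γ ∈ Set.Ioo (0 : ℝ) 1 ∧ ∑' i : ℕ, γ ^ H (m + i) = 1 := by
  set g : ℝ → ℝ := fun x => ∑' i : ℕ, x ^ H (m + i) with hg
  -- the point x0 where g x0 ≥ 1
  set n := H (m + 1) with hn
  have hnpos : 0 < n := hpos (m + 1)
  set x0 : ℝ := (2⁻¹ : ℝ) ^ ((n : ℝ)⁻¹) with hx0def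
  have hx0pos : 0 < x0 := Real.rpow_pos_of_pos (by norm_num) _
  have hx0lt : x0 < 1 := by
    apply Real.rpow_lt_one (by norm_num) (by norm_num)
    positivity
  have hx0pow : x0 ^ n = 2⁻¹ := Real.rpow_inv_natCast_pow (by norm_num) hnpos.ne'
  -- g x0 ≥ 1
  have hgx0 : 1 ≤ g x0 := by
    have hsum := summable_aux H hmono m hx0pos.le hx0lt (x := x0)
    have h2 : ∑ i ∈ Finset.range 2, x0 ^ H (m + i) ≤ g x0 :=
      Summable.sum_le_tsum _ (fun i _ => pow_nonneg hx0pos.le _) hsum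
    have h01 : x0 ^ H (m + 1) ≤ x0 ^ H (m + 0) :=
      pow_le_pow_of_le_one hx0pos.le hx0lt.le
        (hmono.le_iff_le.mpr (by omega))
    have : (1 : ℝ) ≤ ∑ i ∈ Finset.range 2, x0 ^ H (m + i) := by
      rw [Finset.sum_range_succ, Finset.sum_range_one]
      calc (1 : ℝ) = 2⁻¹ + 2⁻¹ := by norm_num
        _ = x0 ^ H (m + 1) + x0 ^ H (m + 1) := by rw [← hn, hx0pow]
        _ ≤ x0 ^ H (m + 0) + x0 ^ H (m + 1) := by linarith
    linarith
  -- g 0 = 0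
  have hg0 : g 0 = 0 := by
    simp only [hg]
    convert tsum_zero with i
    exact zero_pow (Nat.one_le_iff_ne_zero.mp (hpos (m + i)))
  -- continuity on [0, x0]
  have hcont : ContinuousOn g (Set.Icc 0 x0) := by
    refine continuousOn_tsum (u := fun i : ℕ => x0 ^ i)
      (fun i => (continuous_pow _).continuousOn)
      (summable_geometric_of_lt_one hx0pos.le hx0lt) (fun i x hx => ?_)
    rw [Real.norm_eq_abs, abs_of_nonneg (pow_nonneg hx.1 _)]
    calc x ^ H (m + i) ≤ x0 ^ H (m + i) := pow_le_pow_left₀ hx.1 hx.2 _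
      _ ≤ x0 ^ i := pow_le_pow_of_le_one hx0pos.le hx0lt.le
          (le_trans (Nat.le_add_left i m) hmono.le_apply)
  -- IVT
  obtain ⟨c, hc, hgc⟩ : ∃ c ∈ Set.Icc (0 : ℝ) x0, g c = 1 := by
    have := intermediate_value_Icc hx0pos.le hcont
    have h1 : (1 : ℝ) ∈ Set.Icc (g 0) (g x0) := ⟨by rw [hg0]; norm_num, hgx0⟩
    obtain ⟨c, hc, hgc⟩ := this h1
    exact ⟨c, hc, hgc⟩
  have hcpos : 0 < c := by
    rcases hc.1.lt_or_eq with h | h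
    · exact h
    · exfalso; rw [← h, hg0] at hgc; norm_num at hgc
  refine ⟨c, ⟨⟨hcpos, lt_of_le_of_lt hc.2 hx0lt⟩, hgc⟩, ?_⟩
  have hgc' : (∑' i : ℕ, c ^ H (m + i)) = 1 := hgc
  rintro y ⟨⟨hy0, hy1⟩, hgy⟩
  by_contra hne
  rcases lt_or_gt_of_ne hne with h | h
  · have := smono_aux H hmono hpos m hy0.le h (lt_of_le_of_lt hc.2 hx0lt)
    rw [hgy, hgc'] at this; exact lt_irrefl _ this
  · have := smono_aux H hmono hpos m hcpos.le h hy1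
    rw [hgy, hgc'] at this; exact lt_irrefl _ this
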